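/- Let X be a nondegenerate random variable in ℝ^d and X_1, X_2 i.i.d. copies of X. Then there exists s_0 > 0 such that inf_{ω ∈ S^{d−1}} E[ ⟨ω, X_1 − X_2⟩² · 1{ max(|X_1|,|X_2|) ≤ s_0/(2√d) } ] > 0. -/

import Mathlib

open MeasureTheory ProbabilityTheory Filter Set Real
open scoped ENNReal NNReal

noncomputable section

/-- Euclidean space ℝ^d. -/
abbrev E (d : ℕ) := EuclideanSpace ℝ (Fin d)

/-- A measure on ℝ^d is nondegenerate if it is not concentrated on any affine subspace of
dimension `d - 1`, equivalently it gives mass `< 1` to every affine hyperplane. -/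
def IsNondegenerate {d : ℕ} (μ : Measure (E d)) : Prop :=
  ∀ v : E d, v ≠ 0 → ∀ c : ℝ, μ {x | (inner ℝ v x : ℝ) = c} ≠ 1

section Aux

variable {d : ℕ} {Ω : Type} [MeasureSpace Ω] [IsProbabilityMeasure (ℙ : Measure Ω)]
  {X₁ X₂ : Ω → E d}

lemma measA (h₁ : Measurable X₁) (h₂ : Measurable X₂) (R : ℝ) :
    MeasurableSet {x | max ‖X₁ x‖ ‖X₂ x‖ ≤ R} :=
  measurableSet_le (h₁.norm.max h₂.norm) measurable_const

lemma measF (h₁ : Measurable X₁) (h₂ : Measurable X₂) (ω : E d) :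
    Measurable fun x => (inner ℝ ω (X₁ x - X₂ x) : ℝ) :=
  Measurable.inner measurable_const (h₁.sub h₂)

lemma normZ_le {R : ℝ} {x : Ω} (hx : x ∈ {x | max ‖X₁ x‖ ‖X₂ x‖ ≤ R}) :
    ‖X₁ x - X₂ x‖ ≤ 2 * R := by
  have h1 : ‖X₁ x‖ ≤ R := le_trans (le_max_left _ _) hx
  have h2 : ‖X₂ x‖ ≤ R := le_trans (le_max_right _ _) hx
  calc ‖X₁ x - X₂ x‖ ≤ ‖X₁ x‖ + ‖X₂ x‖ := norm_sub_le _ _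
    _ ≤ 2 * R := by linarith

lemma integF (h₁ : Measurable X₁) (h₂ : Measurable X₂) (ω : E d) {R : ℝ} :
    IntegrableOn (fun x => (inner ℝ ω (X₁ x - X₂ x) : ℝ) ^ 2)
      {x | max ‖X₁ x‖ ‖X₂ x‖ ≤ R} ℙ := by
  refine Integrable.mono' (integrable_const ((‖ω‖ * (2 * R)) ^ 2))
    (((measF h₁ h₂ ω).pow_const 2).aestronglyMeasurable) ?_
  filter_upwards [ae_restrict_mem (measA h₁ h₂ R)] with x hx
  have hZ : ‖X₁ x - X₂ x‖ ≤ 2 * R := normZ_le hx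
  have h3 : |(inner ℝ ω (X₁ x - X₂ x) : ℝ)| ≤ ‖ω‖ * (2 * R) :=
    (abs_real_inner_le_norm ω _).trans
      (mul_le_mul_of_nonneg_left hZ (norm_nonneg _))
  calc ‖(inner ℝ ω (X₁ x - X₂ x) : ℝ) ^ 2‖
      = |(inner ℝ ω (X₁ x - X₂ x) : ℝ)| ^ 2 := by
        rw [Real.norm_eq_abs, abs_pow]
    _ ≤ (‖ω‖ * (2 * R)) ^ 2 := by
        exact pow_le_pow_left₀ (abs_nonneg _) h3 2

lemma monoG (h₁ : Measurable X₁) (h₂ : Measurable X₂) (ω : E d) {R R' : ℝ}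
    (hRR' : R ≤ R') :
    ∫ x in {x | max ‖X₁ x‖ ‖X₂ x‖ ≤ R}, (inner ℝ ω (X₁ x - X₂ x) : ℝ) ^ 2 ≤
      ∫ x in {x | max ‖X₁ x‖ ‖X₂ x‖ ≤ R'}, (inner ℝ ω (X₁ x - X₂ x) : ℝ) ^ 2 := by
  refine setIntegral_mono_set (integF h₁ h₂ ω)
    (Eventually.of_forall fun x => sq_nonneg _) ?_
  exact HasSubset.Subset.eventuallyLE fun x hx => le_trans hx hRR'

lemma lipG (h₁ : Measurable X₁) (h₂ : Measurable X₂) {R : ℝ} (hR : 0 ≤ R)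
    {ω ω' : E d} (hω : ‖ω‖ ≤ 1) (hω' : ‖ω'‖ ≤ 1) :
    |(∫ x in {x | max ‖X₁ x‖ ‖X₂ x‖ ≤ R}, (inner ℝ ω (X₁ x - X₂ x) : ℝ) ^ 2) -
      ∫ x in {x | max ‖X₁ x‖ ‖X₂ x‖ ≤ R}, (inner ℝ ω' (X₁ x - X₂ x) : ℝ) ^ 2| ≤
      8 * R ^ 2 * ‖ω - ω'‖ := by
  rw [← integral_sub (integF h₁ h₂ ω) (integF h₁ h₂ ω')]
  have key : ∀ x ∈ {x | max ‖X₁ x‖ ‖X₂ x‖ ≤ R},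
      ‖(inner ℝ ω (X₁ x - X₂ x) : ℝ) ^ 2 - (inner ℝ ω' (X₁ x - X₂ x) : ℝ) ^ 2‖ ≤
        8 * R ^ 2 * ‖ω - ω'‖ := by
    intro x hx
    have hZ : ‖X₁ x - X₂ x‖ ≤ 2 * R := normZ_le hx
    set a : ℝ := inner ℝ ω (X₁ x - X₂ x)
    set b : ℝ := inner ℝ ω' (X₁ x - X₂ x)
    have e : a ^ 2 - b ^ 2 = (a - b) * (a + b) := by ring
    rw [Real.norm_eq_abs, e, abs_mul]
    have h1 : |a - b| ≤ ‖ω - ω'‖ * (2 * R) := by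
      have : a - b = (inner ℝ (ω - ω') (X₁ x - X₂ x) : ℝ) := by
        simp [a, b, inner_sub_left]
      rw [this]
      exact (abs_real_inner_le_norm _ _).trans
        (mul_le_mul_of_nonneg_left hZ (norm_nonneg _))
    have h2 : |a + b| ≤ 2 * (2 * R) := by
      have : a + b = (inner ℝ (ω + ω') (X₁ x - X₂ x) : ℝ) := by
        simp [a, b, inner_add_left]
      rw [this]
      refine (abs_real_inner_le_norm _ _).trans ?_
      have hn : ‖ω + ω'‖ ≤ 2 := (norm_add_le _ _).trans (by linarith)
      exact mul_le_mul hn hZ (norm_nonneg _) (by norm_num)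
    calc |a - b| * |a + b| ≤ (‖ω - ω'‖ * (2 * R)) * (2 * (2 * R)) :=
          mul_le_mul h1 h2 (abs_nonneg _) (by positivity)
      _ = 8 * R ^ 2 * ‖ω - ω'‖ := by ring
  have hb := norm_setIntegral_le_of_norm_le_const (μ := ℙ)
    (measure_lt_top _ _) key
  rw [Real.norm_eq_abs] at hb
  refine hb.trans ?_
  have ht : (ℙ {x | max ‖X₁ x‖ ‖X₂ x‖ ≤ R}).toReal ≤ 1 := by
    have := prob_le_one (μ := ℙ) (s := {x | max ‖X₁ x‖ ‖X₂ x‖ ≤ R})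
    calc (ℙ {x | max ‖X₁ x‖ ‖X₂ x‖ ≤ R}).toReal ≤ (1 : ℝ≥0∞).toReal :=
          ENNReal.toReal_mono ENNReal.one_ne_top this
      _ = 1 := ENNReal.toReal_one
  calc 8 * R ^ 2 * ‖ω - ω'‖ * (ℙ {x | max ‖X₁ x‖ ‖X₂ x‖ ≤ R}).toReal
      ≤ 8 * R ^ 2 * ‖ω - ω'‖ * 1 := by
        exact mul_le_mul_of_nonneg_left ht (by positivity)
    _ = 8 * R ^ 2 * ‖ω - ω'‖ := mul_one _

lemma degenerate_of_ae_eq (h₁ : Measurable X₁) (h₂ : Measurable X₂)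
    (hindep : IndepFun X₁ X₂ ℙ)
    (hident : Measure.map X₁ ℙ = Measure.map X₂ ℙ)
    (hnd : IsNondegenerate (Measure.map X₁ ℙ))
    (ω : E d) (hω : ω ≠ 0)
    (h : ℙ {x | (inner ℝ ω (X₁ x) : ℝ) = inner ℝ ω (X₂ x)} = 1) : False := by
  set ν := Measure.map X₁ ℙ with hν
  haveI : IsProbabilityMeasure ν := Measure.isProbabilityMeasure_map h₁.aemeasurable
  set S : Set (E d × E d) := {p | (inner ℝ ω p.1 : ℝ) = inner ℝ ω p.2} with hSdef
  have hS : MeasurableSet S :=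
    measurableSet_eq_fun (Measurable.inner measurable_const measurable_fst)
      (Measurable.inner measurable_const measurable_snd)
  have hmap : Measure.map (fun x => (X₁ x, X₂ x)) ℙ = ν.prod ν := by
    rw [(indepFun_iff_map_prod_eq_prod_map_map h₁.aemeasurable h₂.aemeasurable).1 hindep,
      ← hident, ← hν]
  have h1 : (ν.prod ν) S = 1 := by
    rw [← hmap, Measure.map_apply (h₁.prodMk h₂) hS]
    exact h
  rw [Measure.prod_apply hS] at h1
  set f : E d → ℝ≥0∞ := fun x => ν (Prod.mk x ⁻¹' S) with hf
  have hfm : Measurable f := measurable_measure_prodMk_left hS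
  have hfle : ∀ x, f x ≤ 1 := fun x => prob_le_one
  have hint_ne_top : ∫⁻ x, f x ∂ν ≠ ⊤ := by rw [h1]; exact ENNReal.one_ne_top
  have h2 : ∫⁻ x, (1 - f x) ∂ν = 0 := by
    rw [lintegral_sub hfm hint_ne_top (ae_of_all _ hfle), h1, lintegral_one,
      measure_univ, tsub_self]
  have h3 : ∀ᵐ x ∂ν, 1 - f x = 0 :=
    (lintegral_eq_zero_iff (measurable_const.sub hfm)).1 h2
  haveI : (ae ν).NeBot := ae_neBot.2 (IsProbabilityMeasure.ne_zero ν)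
  obtain ⟨x, hx⟩ := h3.exists
  have hx1 : f x = 1 := le_antisymm (hfle x) (tsub_eq_zero_iff_le.1 hx)
  refine hnd ω hω (inner ℝ ω x) ?_
  have hset : {y : E d | (inner ℝ ω y : ℝ) = inner ℝ ω x} = Prod.mk x ⁻¹' S := by
    ext y
    simp only [hSdef, mem_setOf_eq, mem_preimage]
    exact eq_comm
  rw [hset]
  exact hx1

lemma pointwise_pos (h₁ : Measurable X₁) (h₂ : Measurable X₂)
    (hindep : IndepFun X₁ X₂ ℙ)
    (hident : Measure.map X₁ ℙ = Measure.map X₂ ℙ)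
    (hnd : IsNondegenerate (Measure.map X₁ ℙ))
    (ω : E d) (hω : ω ≠ 0) :
    ∃ R : ℝ, 0 < R ∧
      0 < ∫ x in {x | max ‖X₁ x‖ ‖X₂ x‖ ≤ R}, (inner ℝ ω (X₁ x - X₂ x) : ℝ) ^ 2 := by
  by_contra hcon
  push_neg at hcon
  have hzero : ∀ n : ℕ,
      ∀ᵐ x ∂ℙ, x ∈ {x | max ‖X₁ x‖ ‖X₂ x‖ ≤ ((n : ℝ) + 1)} →
        (inner ℝ ω (X₁ x - X₂ x) : ℝ) ^ 2 = 0 := by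
    intro n
    have hle := hcon ((n : ℝ) + 1) (by positivity)
    have hge : 0 ≤ ∫ x in {x | max ‖X₁ x‖ ‖X₂ x‖ ≤ ((n : ℝ) + 1)},
        (inner ℝ ω (X₁ x - X₂ x) : ℝ) ^ 2 :=
      setIntegral_nonneg (measA h₁ h₂ _) fun x _ => sq_nonneg _
    have heq : ∫ x in {x | max ‖X₁ x‖ ‖X₂ x‖ ≤ ((n : ℝ) + 1)},
        (inner ℝ ω (X₁ x - X₂ x) : ℝ) ^ 2 = 0 := le_antisymm hle hge
    have := (integral_eq_zero_iff_of_nonneg (fun x => sq_nonneg _)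
      (integF h₁ h₂ ω)).1 heq
    exact (ae_restrict_iff' (measA h₁ h₂ _)).1 this
  have hae : ∀ᵐ x ∂ℙ, (inner ℝ ω (X₁ x) : ℝ) = inner ℝ ω (X₂ x) := by
    have hall := ae_all_iff.2 hzero
    filter_upwards [hall] with x hx
    obtain ⟨n, hn⟩ := exists_nat_ge (max ‖X₁ x‖ ‖X₂ x‖)
    have hmem : x ∈ {x | max ‖X₁ x‖ ‖X₂ x‖ ≤ ((n : ℝ) + 1)} := by
      exact le_trans hn (by linarith)
    have h0 := hx n hmem
    have h0' : (inner ℝ ω (X₁ x - X₂ x) : ℝ) = 0 := by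
      exact pow_eq_zero_iff (two_ne_zero) |>.1 h0
    rw [inner_sub_right] at h0'
    linarith [h0']
  have hmeas : MeasurableSet {x | (inner ℝ ω (X₁ x) : ℝ) = inner ℝ ω (X₂ x)} :=
    measurableSet_eq_fun (Measurable.inner measurable_const h₁)
      (Measurable.inner measurable_const h₂)
  have hone : ℙ {x | (inner ℝ ω (X₁ x) : ℝ) = inner ℝ ω (X₂ x)} = 1 := by
    rw [← prob_compl_eq_zero_iff hmeas]
    exact ae_iff.1 hae
  exact degenerate_of_ae_eq h₁ h₂ hindep hident hnd ω hω hone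

end Aux

/-- **Lemma 4.3**: let `X` be a nondegenerate random variable in ℝ^d and `X₁, X₂` i.i.d.
copies of `X`.  Then there is `s₀ > 0` with
`inf_{ω ∈ S^{d-1}} E[⟨ω, X₁ - X₂⟩² 1{max(|X₁|,|X₂|) ≤ s₀/(2√d)}] > 0`. -/
theorem nondegenerate_truncated_second_moment {d : ℕ} {Ω : Type} [MeasureSpace Ω]
    [IsProbabilityMeasure (ℙ : Measure Ω)]
    (X₁ X₂ : Ω → E d) (h₁ : Measurable X₁) (h₂ : Measurable X₂)
    (hindep : IndepFun X₁ X₂ ℙ)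
    (hident : Measure.map X₁ ℙ = Measure.map X₂ ℙ)
    (hnd : IsNondegenerate (Measure.map X₁ ℙ)) :
    ∃ s₀ > (0:ℝ), ∃ c > (0:ℝ), ∀ ω : E d, ‖ω‖ = 1 →
      c ≤ ∫ ω' in {ω' | max ‖X₁ ω'‖ ‖X₂ ω'‖ ≤ s₀ / (2 * Real.sqrt d)},
            ((inner ℝ ω (X₁ ω' - X₂ ω') : ℝ)) ^ 2 := by
  classical
  by_cases hne : ∃ ω : E d, ‖ω‖ = 1
  swap
  · exact ⟨1, one_pos, 1, one_pos, fun ω hω => absurd ⟨ω, hω⟩ hne⟩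
  have hd : 0 < d := by
    by_contra hcon
    obtain ⟨ω, hω⟩ := hne
    have hd0 : d = 0 := by omega
    subst hd0
    have : ω = 0 := Subsingleton.elim ω 0
    rw [this, norm_zero] at hω
    norm_num at hω
  have hsd : 0 < Real.sqrt d := Real.sqrt_pos.2 (by exact_mod_cast hd)
  set g : ℝ → E d → ℝ := fun R ω =>
    ∫ x in {x | max ‖X₁ x‖ ‖X₂ x‖ ≤ R}, (inner ℝ ω (X₁ x - X₂ x) : ℝ) ^ 2 with hg
  have key : ∀ i : {ω : E d // ‖ω‖ = 1}, ∃ R c ε : ℝ, 0 < R ∧ 0 < c ∧ 0 < ε ∧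
      ∀ ω' : E d, ‖ω'‖ = 1 → dist ω' i.1 < ε → c ≤ g R ω' := by
    rintro ⟨ω₀, hω₀⟩
    have hω₀ne : ω₀ ≠ 0 := fun h => by simp [h] at hω₀
    obtain ⟨R, hR, hpos⟩ := pointwise_pos h₁ h₂ hindep hident hnd ω₀ hω₀ne
    have hpos' : 0 < g R ω₀ := hpos
    refine ⟨R, g R ω₀ / 2, (g R ω₀ / 2) / (8 * R ^ 2 + 1), hR, by positivity,
      by positivity, ?_⟩
    intro ω' hω' hdist
    have hl := lipG h₁ h₂ hR.le (le_of_eq hω') (le_of_eq hω₀)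
    have h8 : 8 * R ^ 2 * ‖ω' - ω₀‖ ≤ g R ω₀ / 2 := by
      have h1 : ‖ω' - ω₀‖ ≤ (g R ω₀ / 2) / (8 * R ^ 2 + 1) := by
        rw [dist_eq_norm] at hdist
        exact hdist.le
      calc 8 * R ^ 2 * ‖ω' - ω₀‖
          ≤ 8 * R ^ 2 * ((g R ω₀ / 2) / (8 * R ^ 2 + 1)) :=
            mul_le_mul_of_nonneg_left h1 (by positivity)
        _ = (g R ω₀ / 2) * (8 * R ^ 2 / (8 * R ^ 2 + 1)) := by ring
        _ ≤ (g R ω₀ / 2) * 1 := by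
            refine mul_le_mul_of_nonneg_left ?_ (by positivity)
            exact div_le_one_of_le₀ (by linarith) (by positivity)
        _ = g R ω₀ / 2 := mul_one _
    have habs : |g R ω' - g R ω₀| ≤ g R ω₀ / 2 := hl.trans h8
    have := abs_le.1 habs
    linarith [this.1]
  choose Rf cf εf hRf hcf hεf hkey using key
  have hco : IsCompact {ω : E d | ‖ω‖ = 1} := by
    have hset : {ω : E d | ‖ω‖ = 1} = Metric.sphere (0 : E d) 1 := by
      ext ω; simp [Metric.mem_sphere, dist_zero_right]
    rw [hset]
    exact isCompact_sphere 0 1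
  have hcover : {ω : E d | ‖ω‖ = 1} ⊆
      ⋃ i : {ω : E d // ‖ω‖ = 1}, Metric.ball i.1 (εf i) := fun ω hω =>
    mem_iUnion.2 ⟨⟨ω, hω⟩, Metric.mem_ball_self (hεf _)⟩
  obtain ⟨t, ht⟩ := hco.elim_finite_subcover _ (fun i => Metric.isOpen_ball) hcover
  obtain ⟨ω₁, hω₁⟩ := hne
  have htne : t.Nonempty := by
    have := ht hω₁
    rw [mem_iUnion₂] at this
    obtain ⟨i, hi, _⟩ := this
    exact ⟨i, hi⟩
  set R := t.sup' htne Rf with hRdef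
  set c := t.inf' htne cf with hcdef
  have hRpos : 0 < R := by
    obtain ⟨i0, hi0⟩ := htne
    exact (hRf i0).trans_le (Finset.le_sup' Rf hi0)
  have hcpos : 0 < c := (Finset.lt_inf'_iff htne).2 fun i _ => hcf i
  refine ⟨R * (2 * Real.sqrt d), by positivity, c, hcpos, ?_⟩
  intro ω hω
  have hrad : R * (2 * Real.sqrt d) / (2 * Real.sqrt d) = R := by
    field_simp
  rw [hrad]
  have hmem := ht hω
  rw [mem_iUnion₂] at hmem
  obtain ⟨i, hit, hball⟩ := hmem
  have h1 : cf i ≤ g (Rf i) ω := hkey i ω hω (by rwa [Metric.mem_ball] at hball)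
  have h2 : g (Rf i) ω ≤ g R ω := monoG h₁ h₂ ω (Finset.le_sup' Rf hit)
  have h3 : c ≤ cf i := Finset.inf'_le cf hit
  exact le_trans h3 (h1.trans h2)
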